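/- Let N ≥ 2 and fix distinct points y_1,…,y_N ∈ ℝ³ with diameter diam(Y) = max_{j,j'} |y_j − y_{j'}|. Then there exists a constant c₁ > 0 depending only on Y such that for every α ∈ ℂ^N with Im α_j ≤ 0 for all j, every zero k of det Γ_{α,Y} with Re k > 0 and Im k ≤ 0 satisfies −Im k ≥ (2/(N·diam(Y)))·log(|Re k| + 1) − c₁. That is, the upper logarithmic bound on resonances is uniform in the dissipative strength parameters α. -/

import Mathlib

open Complex Real
open scoped Classical

/-- The regularized free Green function `G̃_z(x) = e^{iz|x|}/(4π|x|)` for `x ≠ 0`,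
`G̃_z(0) = 0`. -/
noncomputable def Gt (z : ℂ) (x : EuclideanSpace ℝ (Fin 3)) : ℂ :=
  if x = 0 then 0 else Complex.exp (Complex.I * z * ‖x‖) / (4 * Real.pi * ‖x‖)

/-- The matrix `Γ_{α,Y}(z)` with entries
`(α_j − i z/(4π)) δ_{jj'} − G̃_z(y_j − y_{j'})`. -/
noncomputable def GammaM (N : ℕ) (y : Fin N → EuclideanSpace ℝ (Fin 3))
    (α : Fin N → ℂ) (z : ℂ) : Matrix (Fin N) (Fin N) ℂ :=
  Matrix.of fun j j' =>
    (if j = j' then α j - Complex.I * z / (4 * Real.pi) else 0) - Gt z (y j - y j')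

set_option maxHeartbeats 1000000

/-- uniform (in the dissipative strength parameters `α`) upper
logarithmic bound on resonances: `−Im k ≥ (2/(N·diam Y))·log(|Re k|+1) − c₁`
for every zero `k` of `det Γ_{α,Y}` with `Re k > 0`, `Im k ≤ 0`. -/
theorem stmt7 (N : ℕ) (hN : 2 ≤ N) (y : Fin N → EuclideanSpace ℝ (Fin 3))
    (hy : Function.Injective y) (L : ℝ)
    (hL : IsGreatest {d : ℝ | ∃ j j' : Fin N, d = dist (y j) (y j')} L) :
    ∃ c₁ > (0:ℝ), ∀ α : Fin N → ℂ, (∀ j, (α j).im ≤ 0) → ∀ k : ℂ,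
      (GammaM N y α k).det = 0 → 0 < k.re → k.im ≤ 0 →
      2 / (N * L) * Real.log (|k.re| + 1) - c₁ ≤ -k.im := by
  have hπ : (0:ℝ) < Real.pi := Real.pi_pos
  have hNpos : (0:ℝ) < N := by exact_mod_cast (by omega : 0 < N)
  set j0 : Fin N := ⟨0, by omega⟩ with hj0
  set j1 : Fin N := ⟨1, by omega⟩ with hj1
  have hj01 : j0 ≠ j1 := by simp [hj0, hj1, Fin.ext_iff]
  have hLpos : 0 < L := by
    have h1 : dist (y j0) (y j1) ≤ L := hL.2 ⟨j0, j1, rfl⟩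
    have h2 : 0 < dist (y j0) (y j1) := dist_pos.mpr (fun h => hj01 (hy h))
    linarith
  have hLdist : ∀ j j' : Fin N, dist (y j) (y j') ≤ L := fun j j' => hL.2 ⟨j, j', rfl⟩
  -- minimal distance
  set S : Finset (Fin N × Fin N) := Finset.univ.filter (fun p => p.1 ≠ p.2) with hS
  have hmem : ∀ j j' : Fin N, j ≠ j' → (j, j') ∈ S := by
    intro j j' h
    rw [hS, Finset.mem_filter]
    exact ⟨Finset.mem_univ _, h⟩
  have hSne : S.Nonempty := ⟨(j0, j1), hmem _ _ hj01⟩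
  set d : ℝ := S.inf' hSne (fun p => dist (y p.1) (y p.2)) with hd
  have hdpos : 0 < d := by
    rw [hd, Finset.lt_inf'_iff]
    rintro ⟨a, b⟩ hab
    have hab' : a ≠ b := by rw [hS, Finset.mem_filter] at hab; exact hab.2
    exact dist_pos.mpr (fun h => hab' (hy h))
  have hdle : ∀ j j' : Fin N, j ≠ j' → d ≤ dist (y j) (y j') := by
    intro j j' h
    exact Finset.inf'_le _ (hmem _ _ h)
  refine ⟨(Real.log 2 + |Real.log (N / d)|) / L + 1, by positivity, ?_⟩
  intro α hα k hdet hre him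
  set t : ℝ := -k.im with ht
  have htnn : 0 ≤ t := by rw [ht]; linarith
  obtain ⟨v, hv0, hmv⟩ := Matrix.exists_mulVec_eq_zero_iff.mpr hdet
  obtain ⟨j, -, hj⟩ := Finset.exists_max_image Finset.univ
    (fun j => ‖v j‖) ⟨j0, Finset.mem_univ _⟩
  have hvj : 0 < ‖v j‖ := by
    obtain ⟨j2, hj2⟩ := Function.ne_iff.mp hv0
    exact lt_of_lt_of_le (norm_pos_iff.mpr hj2) (hj j2 (Finset.mem_univ _))
  -- row equation
  have hrow : ∑ j', GammaM N y α k j j' * v j' = 0 := by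
    have := congrFun hmv j
    simpa [Matrix.mulVec, dotProduct] using this
  have heq : (α j - Complex.I * k / (4 * Real.pi)) * v j
      = ∑ j', Gt k (y j - y j') * v j' := by
    have h1 : ∑ j', GammaM N y α k j j' * v j'
        = (α j - Complex.I * k / (4 * Real.pi)) * v j
          - ∑ j', Gt k (y j - y j') * v j' := by
      simp only [GammaM, Matrix.of_apply, sub_mul, ite_mul, zero_mul]
      rw [Finset.sum_sub_distrib, Finset.sum_ite_eq]
      simp
    rw [h1] at hrow
    exact sub_eq_zero.mp hrow
  -- bound each Green term
  set B : ℝ := Real.exp (t * L) / (4 * Real.pi * d) with hB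
  have hBnn : 0 ≤ B := by positivity
  have hterm : ∀ j' : Fin N, ‖Gt k (y j - y j') * v j'‖
      ≤ B * ‖v j‖ := by
    intro j'
    rcases eq_or_ne j j' with h | h
    · subst h
      simp [Gt]
      positivity
    · have hx0 : y j - y j' ≠ 0 := sub_ne_zero.mpr (fun hh => h (hy hh))
      have hxn : ‖y j - y j'‖ = dist (y j) (y j') := by rw [dist_eq_norm]
      have hxpos : 0 < ‖y j - y j'‖ := norm_pos_iff.mpr hx0
      have hGt : ‖Gt k (y j - y j')‖
          = Real.exp (t * ‖y j - y j'‖) / (4 * Real.pi * ‖y j - y j'‖) := by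
        rw [Gt, if_neg hx0, norm_div, Complex.norm_exp]
        congr 1
        · congr 1
          simp [Complex.mul_re, Complex.mul_im, ht]
        · rw [show ((4:ℂ) * Real.pi * ‖y j - y j'‖) = ((4 * Real.pi * ‖y j - y j'‖ : ℝ) : ℂ) by push_cast; ring,
            Complex.norm_real, Real.norm_eq_abs, abs_of_pos (by positivity)]
      have h1 : ‖Gt k (y j - y j')‖ ≤ B := by
        rw [hGt, hB]
        apply div_le_div₀ (by positivity)
        · exact Real.exp_le_exp.mpr (mul_le_mul_of_nonneg_left (hxn ▸ hLdist j j') htnn)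
        · positivity
        · have := hdle j j' h
          nlinarith
      rw [norm_mul]
      exact mul_le_mul h1 (hj j' (Finset.mem_univ _)) (norm_nonneg _) hBnn
  -- the key inequality
  have hsum : ‖(α j - Complex.I * k / (4 * Real.pi)) * v j‖
      ≤ N * B * ‖v j‖ := by
    rw [heq]
    calc ‖∑ j', Gt k (y j - y j') * v j'‖
        ≤ ∑ j' : Fin N, ‖Gt k (y j - y j') * v j'‖ := by
          exact norm_sum_le _ _
      _ ≤ ∑ _j' : Fin N, B * ‖v j‖ :=
          Finset.sum_le_sum (fun j' _ => hterm j')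
      _ = N * B * ‖v j‖ := by
          rw [Finset.sum_const, Finset.card_univ, Fintype.card_fin, nsmul_eq_mul]; ring
  have hlow : k.re / (4 * Real.pi) ≤ ‖α j - Complex.I * k / (4 * Real.pi)‖ := by
    have him' : (α j - Complex.I * k / (4 * Real.pi)).im = (α j).im - k.re / (4 * Real.pi) := by
      simp [Complex.sub_im, Complex.div_im, Complex.mul_im, Complex.mul_re,
        Complex.normSq_apply]
      field_simp
    calc k.re / (4 * Real.pi) ≤ -((α j).im - k.re / (4 * Real.pi)) := by
          have := hα j; linarith
      _ = -(α j - Complex.I * k / (4 * Real.pi)).im := by rw [him']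
      _ ≤ |(α j - Complex.I * k / (4 * Real.pi)).im| := neg_le_abs _
      _ ≤ ‖α j - Complex.I * k / (4 * Real.pi)‖ := Complex.abs_im_le_norm _
  have hkey : k.re ≤ (N / d) * Real.exp (t * L) := by
    have h1 : k.re / (4 * Real.pi) * ‖v j‖ ≤ N * B * ‖v j‖ := by
      calc k.re / (4 * Real.pi) * ‖v j‖
          ≤ ‖α j - Complex.I * k / (4 * Real.pi)‖ * ‖v j‖ :=
            mul_le_mul_of_nonneg_right hlow (norm_nonneg _)
        _ = ‖(α j - Complex.I * k / (4 * Real.pi)) * v j‖ := (norm_mul _ _).symm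
        _ ≤ N * B * ‖v j‖ := hsum
    have h2 : k.re / (4 * Real.pi) ≤ N * B := le_of_mul_le_mul_right h1 hvj
    rw [hB] at h2
    have h3 := (div_le_iff₀ (by positivity : (0:ℝ) < 4 * Real.pi)).mp h2
    calc k.re ≤ ↑N * (Real.exp (t * L) / (4 * Real.pi * d)) * (4 * Real.pi) := h3
      _ = ↑N / d * Real.exp (t * L) := by field_simp
  -- conclude
  have hCpos : (0:ℝ) < N / d := by positivity
  have hlog : Real.log k.re ≤ Real.log (N / d) + t * L := by
    calc Real.log k.re ≤ Real.log ((N / d) * Real.exp (t * L)) :=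
          Real.log_le_log hre hkey
      _ = Real.log (N / d) + t * L := by
          rw [Real.log_mul (ne_of_gt hCpos) (ne_of_gt (Real.exp_pos _)), Real.log_exp]
  have hlog2 : Real.log (k.re + 1) ≤ Real.log 2 + |Real.log (N / d)| + t * L := by
    rcases le_or_gt k.re 1 with h | h
    · have : Real.log (k.re + 1) ≤ Real.log 2 := Real.log_le_log (by linarith) (by linarith)
      have h2 : 0 ≤ |Real.log (N / d)| := abs_nonneg _
      nlinarith
    · have h1 : Real.log (k.re + 1) ≤ Real.log (2 * k.re) :=
        Real.log_le_log (by linarith) (by linarith)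
      rw [Real.log_mul (by norm_num) (by linarith)] at h1
      have h2 : Real.log (N / d) ≤ |Real.log (N / d)| := le_abs_self _
      linarith
  have habs_re : |k.re| = k.re := abs_of_pos hre
  rw [habs_re]
  have hlognn : 0 ≤ Real.log (k.re + 1) := Real.log_nonneg (by linarith)
  have hcoef : 2 / (N * L) ≤ 1 / L := by
    rw [div_le_div_iff₀ (by positivity) hLpos]
    have : (2:ℝ) ≤ N := by exact_mod_cast hN
    nlinarith
  have hmain : 1 / L * Real.log (k.re + 1)
      ≤ (Real.log 2 + |Real.log (N / d)|) / L + t := by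
    rw [div_add' _ _ _ (ne_of_gt hLpos)] at *
    rw [div_mul_eq_mul_div, one_mul, div_le_div_iff₀ hLpos hLpos]
    nlinarith
  have hfinal : 2 / (N * L) * Real.log (k.re + 1)
      ≤ (Real.log 2 + |Real.log (N / d)|) / L + 1 + t := by
    have := mul_le_mul_of_nonneg_right hcoef hlognn
    linarith
  linarith
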